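/- arXiv:0911.1289 — 3 statements merged into one kernel-verified Lean document; each statement's English description precedes it below -/
import Mathlib

section
/- For any nonempty set E ⊆ ℝ and any function f : ℝ → ℝ with inf_{x∈E} h_f(x) = h > 0, the Hausdorff dimension of the range satisfies dim_H f(E) ≤ (dim_H E)/h ∧ 1. -/
open Filter MeasureTheory Set
open scoped ENNReal

/-- Pointwise Hölder exponent of `f` at `x`. -/
noncomputable def holderExp (f : ℝ → ℝ) (x : ℝ) : ℝ :=
  Filter.liminf
    (fun r : ℝ =>
      Real.log (⨆ s ∈ Metric.ball x r, ⨆ t ∈ Metric.ball x r, |f s - f t|) / Real.log r)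
    (nhdsWithin 0 (Set.Ioi 0))

open scoped NNReal

lemma osc_eq_zero_of_unbounded (f : ℝ → ℝ) (x r : ℝ)
    (hub : ¬ BddAbove ((fun y => |f y|) '' Metric.ball x r)) :
    (⨆ s ∈ Metric.ball x r, ⨆ t ∈ Metric.ball x r, |f s - f t|) = 0 := by
  have inner : ∀ s : ℝ,
      (⨆ _ : s ∈ Metric.ball x r, ⨆ t, ⨆ _ : t ∈ Metric.ball x r, |f s - f t|) = 0 := by
    intro s
    by_cases hs : s ∈ Metric.ball x r
    · rw [ciSup_pos hs]
      apply Real.iSup_of_not_bddAbove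
      rintro ⟨b, hb⟩
      obtain ⟨y, hy, hy2⟩ : ∃ y ∈ Metric.ball x r, b + |f s| < |f y| := by
        by_contra hc
        push_neg at hc
        exact hub ⟨b + |f s|, by rintro _ ⟨y, hy, rfl⟩; exact hc y hy⟩
      have h1 : (⨆ _ : y ∈ Metric.ball x r, |f s - f y|) ≤ b :=
        hb (Set.mem_range_self y)
      rw [ciSup_pos hy] at h1
      have h2 : |f y| - |f s| ≤ |f s - f y| := by
        have := abs_sub_abs_le_abs_sub (f y) (f s)
        rwa [abs_sub_comm] at this
      linarith
    · rw [ciSup_neg hs, Real.sSup_empty]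
  simp only [inner]
  exact ciSup_const

lemma le_osc (f : ℝ → ℝ) (x r M : ℝ) (hM : ∀ y ∈ Metric.ball x r, |f y| ≤ M)
    {s t : ℝ} (hs : s ∈ Metric.ball x r) (ht : t ∈ Metric.ball x r) :
    |f s - f t| ≤ ⨆ s ∈ Metric.ball x r, ⨆ t ∈ Metric.ball x r, |f s - f t| := by
  have hM0 : 0 ≤ M := (abs_nonneg _).trans (hM s hs)
  have hgb : ∀ s' : ℝ, s' ∈ Metric.ball x r → ∀ t' : ℝ,
      (⨆ _ : t' ∈ Metric.ball x r, |f s' - f t'|) ≤ 2 * M := by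
    intro s' hs' t'
    by_cases ht' : t' ∈ Metric.ball x r
    · rw [ciSup_pos ht']
      calc |f s' - f t'| ≤ |f s'| + |f t'| := abs_sub _ _
        _ ≤ 2 * M := by have := hM s' hs'; have := hM t' ht'; linarith
    · rw [ciSup_neg ht', Real.sSup_empty]; linarith
  have hGb : ∀ s' : ℝ,
      (⨆ _ : s' ∈ Metric.ball x r, ⨆ t', ⨆ _ : t' ∈ Metric.ball x r, |f s' - f t'|) ≤ 2 * M := by
    intro s'
    by_cases hs' : s' ∈ Metric.ball x r
    · rw [ciSup_pos hs']
      exact Real.iSup_le (hgb s' hs') (by linarith)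
    · rw [ciSup_neg hs', Real.sSup_empty]; linarith
  have houter : BddAbove (Set.range fun s' =>
      ⨆ _ : s' ∈ Metric.ball x r, ⨆ t', ⨆ _ : t' ∈ Metric.ball x r, |f s' - f t'|) :=
    ⟨2 * M, by rintro _ ⟨s', rfl⟩; exact hGb s'⟩
  have hinner : BddAbove (Set.range fun t' =>
      ⨆ _ : t' ∈ Metric.ball x r, |f s - f t'|) :=
    ⟨2 * M, by rintro _ ⟨t', rfl⟩; exact hgb s hs t'⟩
  calc |f s - f t| = ⨆ _ : t ∈ Metric.ball x r, |f s - f t| := (ciSup_pos (f := fun _ : t ∈ Metric.ball x r => |f s - f t|) ht).symm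
    _ ≤ ⨆ t', ⨆ _ : t' ∈ Metric.ball x r, |f s - f t'| := le_ciSup hinner t
    _ = ⨆ _ : s ∈ Metric.ball x r, ⨆ t', ⨆ _ : t' ∈ Metric.ball x r, |f s - f t'| :=
      (ciSup_pos (f := fun _ : s ∈ Metric.ball x r =>
        ⨆ t', ⨆ _ : t' ∈ Metric.ball x r, |f s - f t'|) hs).symm
    _ ≤ _ := le_ciSup houter s

lemma exists_r0 (f : ℝ → ℝ) (x h h' : ℝ) (hh : 0 < h) (hh'0 : 0 < h') (hh' : h' < h)
    (hx : h ≤ holderExp f x) :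
    ∃ ε > 0, ∀ r, 0 < r → r < ε →
      ∀ s ∈ Metric.ball x r, ∀ t ∈ Metric.ball x r, |f s - f t| ≤ r ^ h' := by
  set F := fun r : ℝ => Real.log
      (⨆ s ∈ Metric.ball x r, ⨆ t ∈ Metric.ball x r, |f s - f t|) / Real.log r with hF
  have hx' : h ≤ sSup {a | ∀ᶠ r in nhdsWithin (0:ℝ) (Set.Ioi 0), a ≤ F r} := by
    rw [holderExp, Filter.liminf_eq] at hx
    exact hx
  have hne : {a | ∀ᶠ r in nhdsWithin (0:ℝ) (Set.Ioi 0), a ≤ F r}.Nonempty := by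
    by_contra hc
    rw [not_nonempty_iff_eq_empty] at hc
    rw [hc, Real.sSup_empty] at hx'
    linarith
  obtain ⟨a, ha, hlt⟩ := exists_lt_of_lt_csSup hne (lt_of_lt_of_le hh' hx')
  have h1 : ∀ᶠ r in nhdsWithin (0:ℝ) (Set.Ioi 0), h' < F r :=
    (Filter.eventually_iff.2 ha).mono fun r hr => lt_of_lt_of_le hlt hr
  have h2 : ∀ᶠ r in nhdsWithin (0:ℝ) (Set.Ioi 0), r < 1 :=
    mem_nhdsWithin_of_mem_nhds (Iio_mem_nhds one_pos)
  obtain ⟨u, hu, hsub⟩ := mem_nhdsGT_iff_exists_Ioo_subset.1 (h1.and h2)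
  refine ⟨u, hu, ?_⟩
  intro r hr0 hru s hs t ht
  obtain ⟨hFr, hr1⟩ := hsub ⟨hr0, hru⟩
  have hlogr : Real.log r < 0 := Real.log_neg hr0 hr1
  set A := (⨆ s ∈ Metric.ball x r, ⨆ t ∈ Metric.ball x r, |f s - f t|) with hA
  have hlogA : Real.log A < h' * Real.log r := (lt_div_iff_of_neg hlogr).1 hFr
  have hneg : h' * Real.log r < 0 := mul_neg_of_pos_of_neg hh'0 hlogr
  by_cases hb : BddAbove ((fun y => |f y|) '' Metric.ball x r)
  · obtain ⟨M, hM⟩ := hb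
    have hMb : ∀ y ∈ Metric.ball x r, |f y| ≤ M := fun y hy => hM ⟨y, hy, rfl⟩
    have key := le_osc f x r M hMb hs ht
    rcases le_or_gt A 0 with hA0 | hA0
    · exact key.trans (hA0.trans (Real.rpow_pos_of_pos hr0 h').le)
    · refine key.trans ?_
      have hAe : A = Real.exp (Real.log A) := (Real.exp_log hA0).symm
      rw [← hA, hAe, Real.rpow_def_of_pos hr0]
      exact (Real.exp_lt_exp.2 (by rw [mul_comm (Real.log r) h']; exact hlogA)).le
  · exfalso
    rw [hA, osc_eq_zero_of_unbounded f x r hb, Real.log_zero] at hlogA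
    linarith

theorem stmt_2 (f : ℝ → ℝ) (E : Set ℝ) (hne : E.Nonempty)
    (h : ℝ) (hh : 0 < h) (hinf : sInf (holderExp f '' E) = h) :
    dimH (f '' E) ≤ min (dimH E / ENNReal.ofReal h) 1 := by
  have hbdd : BddBelow (holderExp f '' E) := by
    by_contra hb
    rw [Real.sInf_of_not_bddBelow hb] at hinf
    linarith
  have hlow : ∀ x ∈ E, h ≤ holderExp f x := fun x hx =>
    hinf ▸ csInf_le hbdd (mem_image_of_mem _ hx)
  have hone : dimH (f '' E) ≤ 1 :=
    le_trans (dimH_mono (subset_univ _)) (le_of_eq Real.dimH_univ)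
  refine le_min ?_ hone
  have key2 : ∀ h' : ℝ, 0 < h' → h' < h →
      dimH (f '' E) ≤ dimH E / ENNReal.ofReal h' := by
    intro h' h'0 h'h
    set En : ℕ → Set ℝ := fun n => {x | x ∈ E ∧ ∀ r, 0 < r → r < 1/(n+1:ℝ) →
      ∀ s ∈ Metric.ball x r, ∀ t ∈ Metric.ball x r, |f s - f t| ≤ r ^ h'} with hEn
    have hcover : E ⊆ ⋃ n, En n := by
      intro x hx
      obtain ⟨ε, hε, hprop⟩ := exists_r0 f x h h' hh h'0 h'h (hlow x hx)
      obtain ⟨n, hn⟩ := exists_nat_one_div_lt hε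
      exact mem_iUnion.2 ⟨n, hx, fun r hr0 hrn => hprop r hr0 (hrn.trans hn)⟩
    have himg : ∀ n, dimH (f '' En n) ≤ dimH E / ENNReal.ofReal h' := by
      intro n
      have hr' : 0 < h'.toNNReal := Real.toNNReal_pos.2 h'0
      have hloc : ∀ x ∈ En n, ∃ C : ℝ≥0, ∃ t ∈ nhdsWithin x (En n),
          HolderOnWith C h'.toNNReal f t := by
        intro x hxn
        have hN : (0:ℝ) < 1/(4*(n+1):ℝ) := by positivity
        refine ⟨((2:ℝ) ^ h').toNNReal, En n ∩ Metric.ball x (1/(4*(n+1):ℝ)),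
          inter_mem_nhdsWithin _ (Metric.ball_mem_nhds _ hN), ?_⟩
        intro s hs t ht
        rcases eq_or_ne s t with rfl | hst
        · simp
        · have hd : 0 < dist s t := dist_pos.2 hst
          have h1 : dist s x < 1/(4*(n+1):ℝ) := Metric.mem_ball.1 hs.2
          have h2 : dist t x < 1/(4*(n+1):ℝ) := Metric.mem_ball.1 ht.2
          have hr2 : 2 * dist s t < 1/(n+1:ℝ) := by
            have h3 : dist s t ≤ dist s x + dist x t := dist_triangle s x t
            have h4 : dist x t = dist t x := dist_comm x t
            have h5 : (0:ℝ) < (n:ℝ) + 1 := by positivity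
            have h6 : 2 * (1/(4*(n+1):ℝ)) + 2 * (1/(4*(n+1):ℝ)) = 1/(n+1:ℝ) := by
              field_simp
              norm_num
            nlinarith
          have hball_s : s ∈ Metric.ball s (2 * dist s t) :=
            Metric.mem_ball_self (by positivity)
          have hball_t : t ∈ Metric.ball s (2 * dist s t) := by
            rw [Metric.mem_ball, dist_comm]
            linarith
          have hbound := hs.1.2 (2 * dist s t) (by positivity) hr2 s hball_s t hball_t
          have heq : (2 * dist s t) ^ h' = 2 ^ h' * dist s t ^ h' :=
            Real.mul_rpow (by norm_num) dist_nonneg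
          rw [edist_dist, edist_dist]
          have hc : (((((2:ℝ) ^ h').toNNReal : ℝ≥0)) : ℝ≥0∞) = ENNReal.ofReal ((2:ℝ) ^ h') := rfl
          rw [hc, Real.coe_toNNReal _ h'0.le, ENNReal.ofReal_rpow_of_pos hd,
            ← ENNReal.ofReal_mul (by positivity)]
          apply ENNReal.ofReal_le_ofReal
          rw [Real.dist_eq]
          exact hbound.trans (le_of_eq heq)
      have := dimH_image_le_of_locally_holder_on hr' hloc
      refine this.trans ?_
      have hco : ((h'.toNNReal : ℝ≥0) : ℝ≥0∞) = ENNReal.ofReal h' := rfl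
      rw [hco]
      exact ENNReal.div_le_div_right (dimH_mono fun y hy => hy.1) _
    calc dimH (f '' E) ≤ dimH (⋃ n, f '' En n) := by
          refine dimH_mono ?_
          rw [← image_iUnion]
          exact image_mono hcover
      _ = ⨆ n, dimH (f '' En n) := dimH_iUnion _
      _ ≤ dimH E / ENNReal.ofReal h' := iSup_le himg
  have hXh : dimH (f '' E) * ENNReal.ofReal h ≤ dimH E := by
    apply ENNReal.le_of_forall_pos_le_add
    intro ε hε hfin
    set δ := min ((ε:ℝ)/2) (h/2) with hδ
    have hε0 : (0:ℝ) < ε := hε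
    have hδ0 : 0 < δ := lt_min (by positivity) (by positivity)
    have hδh : δ < h := (min_le_right _ _).trans_lt (by linarith)
    have h1 : dimH (f '' E) * ENNReal.ofReal (h - δ) ≤ dimH E := by
      have hk := key2 (h - δ) (by linarith) (by linarith)
      rw [ENNReal.le_div_iff_mul_le (Or.inl (by
        simp only [ne_eq, ENNReal.ofReal_eq_zero, not_le]; linarith))
        (Or.inl ENNReal.ofReal_ne_top)] at hk
      exact hk
    have hδε : ENNReal.ofReal δ ≤ (ε : ℝ≥0∞) := by
      calc ENNReal.ofReal δ ≤ ENNReal.ofReal ((ε:ℝ)/2) :=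
            ENNReal.ofReal_le_ofReal (min_le_left _ _)
        _ ≤ ENNReal.ofReal (ε:ℝ) := ENNReal.ofReal_le_ofReal (by linarith)
        _ = (ε : ℝ≥0∞) := ENNReal.ofReal_coe_nnreal
    calc dimH (f '' E) * ENNReal.ofReal h
        ≤ dimH (f '' E) * (ENNReal.ofReal (h - δ) + ENNReal.ofReal δ) := by
          apply mul_le_mul_right
          rw [← ENNReal.ofReal_add (by linarith) hδ0.le]
          exact ENNReal.ofReal_le_ofReal (by linarith)
      _ = dimH (f '' E) * ENNReal.ofReal (h - δ) + dimH (f '' E) * ENNReal.ofReal δ := by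
          rw [mul_add]
      _ ≤ dimH E + 1 * ENNReal.ofReal δ := add_le_add h1 (mul_le_mul_left hone _)
      _ ≤ dimH E + ε := by rw [one_mul]; exact add_le_add_right hδε _
  rw [ENNReal.le_div_iff_mul_le (Or.inl (by
    simp only [ne_eq, ENNReal.ofReal_eq_zero, not_le]; linarith))
    (Or.inl ENNReal.ofReal_ne_top)]
  exact hXh
end

section
/- For any nonempty set E ⊆ ℝ and any function f : ℝ → ℝ with inf_{x∈E} h_f(x) = h ∈ (0,1], the Hausdorff dimension of the graph satisfies dim_H G_f(E) ≤ dim_H E + 1 − h. -/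
open Filter MeasureTheory Set
open scoped ENNReal NNReal

noncomputable def oscSup (f : ℝ → ℝ) (x r : ℝ) : ℝ :=
  ⨆ s ∈ Metric.ball x r, ⨆ t ∈ Metric.ball x r, |f s - f t|

lemma osc_le_oscSup {f : ℝ → ℝ} {x r : ℝ} (hS : 0 < oscSup f x r) :
    ∀ s ∈ Metric.ball x r, ∀ t ∈ Metric.ball x r, |f s - f t| ≤ oscSup f x r := by
  by_cases hb : ∃ M : ℝ, ∀ t ∈ Metric.ball x r, |f t| ≤ M
  · obtain ⟨M, hM⟩ := hb
    have hr : 0 < r := by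
      by_contra hr
      push_neg at hr
      have hball : Metric.ball x r = ∅ := Metric.ball_eq_empty.2 hr
      simp [oscSup, hball] at hS
    have hM0 : 0 ≤ M := le_trans (abs_nonneg _) (hM x (Metric.mem_ball_self hr))
    intro s hs t ht
    have hgbdd : ∀ u : ℝ, BddAbove (Set.range fun v => ⨆ _ : v ∈ Metric.ball x r, |f u - f v|) := by
      intro u
      refine ⟨|f u| + M, ?_⟩
      rintro _ ⟨v, rfl⟩
      dsimp only
      by_cases hv : v ∈ Metric.ball x r
      · rw [ciSup_pos hv]
        calc |f u - f v| ≤ |f u| + |f v| := abs_sub _ _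
          _ ≤ |f u| + M := by have := hM v hv; linarith
      · simp [hv]
        positivity
    have hinner : ∀ u : ℝ, u ∈ Metric.ball x r →
        (⨆ v ∈ Metric.ball x r, |f u - f v|) ≤ 2 * M := by
      intro u hu
      refine Real.iSup_le (fun v => ?_) (by linarith)
      by_cases hv : v ∈ Metric.ball x r
      · rw [ciSup_pos hv]
        calc |f u - f v| ≤ |f u| + |f v| := abs_sub _ _
          _ ≤ 2 * M := by have := hM u hu; have := hM v hv; linarith
      · simp [hv]; linarith
    have h1 : |f s - f t| ≤ ⨆ v ∈ Metric.ball x r, |f s - f v| := by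
      have := le_ciSup (hgbdd s) t
      rwa [ciSup_pos ht] at this
    have h2 : (⨆ v ∈ Metric.ball x r, |f s - f v|) ≤ oscSup f x r := by
      have hAbdd : BddAbove (Set.range fun u =>
          ⨆ _ : u ∈ Metric.ball x r, ⨆ v ∈ Metric.ball x r, |f u - f v|) := by
        refine ⟨max 0 (2 * M), ?_⟩
        rintro _ ⟨u, rfl⟩
        dsimp only
        by_cases hu : u ∈ Metric.ball x r
        · rw [ciSup_pos hu]
          exact le_max_of_le_right (hinner u hu)
        · simp [hu]
      have := le_ciSup hAbdd s
      rwa [ciSup_pos hs] at this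
    linarith
  · exfalso
    push_neg at hb
    have hzero : ∀ u : ℝ, (⨆ v ∈ Metric.ball x r, |f u - f v|) = 0 := by
      intro u
      apply Real.iSup_of_not_bddAbove
      rintro ⟨M, hMb⟩
      obtain ⟨t, ht, hft⟩ := hb (M + |f u|)
      have h3 : (⨆ _ : t ∈ Metric.ball x r, |f u - f t|) ≤ M := hMb ⟨t, rfl⟩
      rw [ciSup_pos ht] at h3
      have h4 : |f t| ≤ |f u| + |f u - f t| := by
        have := abs_sub_abs_le_abs_sub (f t) (f u)
        rw [abs_sub_comm (f t) (f u)] at this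
        linarith [abs_nonneg (f u - f t), neg_abs_le (f t)]
      linarith
    have hfin : oscSup f x r = 0 := by
      simp only [oscSup, hzero]
      simp
    linarith

lemma oscSup_nonneg (f : ℝ → ℝ) (x r : ℝ) : 0 ≤ oscSup f x r := by
  unfold oscSup
  by_cases hb : BddAbove (Set.range fun s => ⨆ _ : s ∈ Metric.ball x r,
      ⨆ t ∈ Metric.ball x r, |f s - f t|)
  · by_cases hr : r ≤ 0
    · have hball : Metric.ball x r = ∅ := Metric.ball_eq_empty.2 hr
      simp [hball]
    · push_neg at hr
      have hx : x ∈ Metric.ball x r := Metric.mem_ball_self hr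
      have h1 := le_ciSup hb x
      rw [ciSup_pos hx] at h1
      refine le_trans ?_ h1
      by_cases hb2 : BddAbove (Set.range fun t => ⨆ _ : t ∈ Metric.ball x r, |f x - f t|)
      · have h2 := le_ciSup hb2 x
        rw [ciSup_pos hx] at h2
        exact le_trans (abs_nonneg _) h2
      · rw [Real.iSup_of_not_bddAbove hb2]
  · rw [Real.iSup_of_not_bddAbove hb]

lemma pointwise_holder {f : ℝ → ℝ} {x h h' : ℝ} (hx : h ≤ holderExp f x)
    (hh : 0 < h') (hh' : h' < h) :
    ∃ n : ℕ, ∀ r : ℝ, 0 < r → r < 1 / (n + 2) →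
      ∀ s ∈ Metric.ball x r, ∀ t ∈ Metric.ball x r, |f s - f t| ≤ r ^ h' := by
  set u : ℝ → ℝ := fun r =>
    Real.log (⨆ s ∈ Metric.ball x r, ⨆ t ∈ Metric.ball x r, |f s - f t|) / Real.log r with hu
  have hle : holderExp f x = sSup {a | ∀ᶠ r in nhdsWithin 0 (Set.Ioi 0), a ≤ u r} := by
    rw [holderExp, Filter.liminf_eq]
  set A := {a | ∀ᶠ r in nhdsWithin 0 (Set.Ioi 0), a ≤ u r} with hA
  have hAne : A.Nonempty ∧ BddAbove A := by
    by_contra hc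
    have : sSup A = 0 := by
      rcases not_and_or.1 hc with hc | hc
      · rw [Set.not_nonempty_iff_eq_empty.1 hc]; exact Real.sSup_empty
      · exact Real.sSup_of_not_bddAbove hc
    rw [hle, this] at hx
    linarith
  obtain ⟨a, haA, hah'⟩ : ∃ a ∈ A, h' < a := by
    apply exists_lt_of_lt_csSup hAne.1
    calc h' < h := hh'
      _ ≤ sSup A := by rw [hle] at hx; exact hx
  -- extract r0
  obtain ⟨r1, hr1, hsub⟩ := mem_nhdsGT_iff_exists_Ioo_subset.1 haA
  -- choose n with 1/(n+2) < min r1 1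
  obtain ⟨n, hn⟩ := exists_nat_gt (max (1 / r1) 1)
  refine ⟨n, fun r hr0 hrn s hs t ht => ?_⟩
  have hr1pos : 0 < r1 := hr1
  have hn2 : (1 : ℝ) / (n + 2) < r1 := by
    rw [div_lt_iff₀ (by positivity)]
    rw [← div_lt_iff₀' hr1pos]
    have : (1:ℝ)/r1 ≤ max (1/r1) 1 := le_max_left _ _
    have hnn : (0:ℝ) ≤ n := Nat.cast_nonneg n
    linarith
  have hrlt1 : r < 1 := by
    have h2 : (1:ℝ)/(n+2) ≤ 1/2 := by
      apply div_le_div_of_nonneg_left one_pos.le two_pos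
      have : (0:ℝ) ≤ n := Nat.cast_nonneg n
      linarith
    linarith
  have hra : a ≤ u r := hsub ⟨hr0, lt_trans hrn hn2⟩
  have hlogr : Real.log r < 0 := Real.log_neg hr0 hrlt1
  have hlogS : Real.log (oscSup f x r) ≤ a * Real.log r := by
    rw [hu] at hra
    dsimp only at hra
    rw [le_div_iff_of_neg hlogr] at hra
    exact hra
  have hSpos : 0 < oscSup f x r := by
    rcases lt_or_eq_of_le (oscSup_nonneg f x r) with hp | hp
    · exact hp
    · exfalso
      rw [← hp, Real.log_zero] at hlogS
      nlinarith [hlogS]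
  have key : oscSup f x r ≤ r ^ h' := by
    have h5 : oscSup f x r ≤ r ^ a := by
      rw [← Real.exp_log hSpos, Real.rpow_def_of_pos hr0]
      exact Real.exp_le_exp.2 (by rw [mul_comm] at hlogS; exact hlogS)
    calc oscSup f x r ≤ r ^ a := h5
      _ ≤ r ^ h' := Real.rpow_le_rpow_of_exponent_ge hr0 hrlt1.le hah'.le
  exact le_trans (osc_le_oscSup hSpos s hs t ht) key

lemma exists_cover {X : Type*} [EMetricSpace X] [MeasurableSpace X] [BorelSpace X]
    (d : ℝ) (s : Set X) (hs : μH[d] s = 0) {ε δ : ℝ≥0∞} (hε : 0 < ε) (hδ : 0 < δ) :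
    ∃ t : ℕ → Set X, s ⊆ ⋃ n, t n ∧ (∀ n, EMetric.diam (t n) ≤ δ) ∧
      ∑' n, ⨆ _ : (t n).Nonempty, EMetric.diam (t n) ^ d < ε := by
  have happ := MeasureTheory.Measure.hausdorffMeasure_apply d s
  rw [hs] at happ
  have hinf : (⨅ (t : ℕ → Set X) (_ : s ⊆ ⋃ n, t n) (_ : ∀ n, EMetric.diam (t n) ≤ δ),
      ∑' n, ⨆ _ : (t n).Nonempty, EMetric.diam (t n) ^ d) = 0 := by
    apply le_antisymm _ zero_le
    rw [happ]
    exact le_iSup₂ (f := fun (r : ℝ≥0∞) (_ : 0 < r) =>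
      ⨅ (t : ℕ → Set X) (_ : s ⊆ ⋃ n, t n) (_ : ∀ n, EMetric.diam (t n) ≤ r),
        ∑' n, ⨆ _ : (t n).Nonempty, EMetric.diam (t n) ^ d) δ hδ
  have hlt : (⨅ (t : ℕ → Set X) (_ : s ⊆ ⋃ n, t n) (_ : ∀ n, EMetric.diam (t n) ≤ δ),
      ∑' n, ⨆ _ : (t n).Nonempty, EMetric.diam (t n) ^ d) < ε := by
    rw [hinf]; exact hε
  rw [iInf_lt_iff] at hlt
  obtain ⟨t, ht⟩ := hlt
  rw [iInf_lt_iff] at ht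
  obtain ⟨hcov, ht⟩ := ht
  rw [iInf_lt_iff] at ht
  obtain ⟨hdiam, ht⟩ := ht
  exact ⟨t, hcov, hdiam, ht⟩

lemma cover_step {f : ℝ → ℝ} {G : Set ℝ} {h' : ℝ} (h'0 : 0 < h') (h'1 : h' ≤ 1)
    (Hol : ∀ x ∈ G, ∀ y ∈ G, |f x - f y| ≤ |x - y| ^ h')
    {d : ℝ≥0} (hd0 : 0 < d) {δ : ℝ≥0∞} (hδ1 : δ ≤ 1)
    (t : ℕ → Set ℝ) (hcov : G ⊆ ⋃ n, t n) (hdiam : ∀ n, EMetric.diam (t n) ≤ δ) :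
    ∃ T : ℕ × ℕ → Set (ℝ × ℝ), ((fun x => (x, f x)) '' G ⊆ ⋃ i, T i) ∧
      (∀ i, EMetric.diam (T i) ≤ 2 * δ) ∧
      ∑' i, EMetric.diam (T i) ^ ((d : ℝ) + (1 - h')) ≤
        ENNReal.ofReal (2 ^ ((d : ℝ) + (1 - h')) * 4) *
          ∑' n, ⨆ _ : (t n).Nonempty, EMetric.diam (t n) ^ (d : ℝ) := by
  classical
  set D : ℝ := (d : ℝ) + (1 - h') with hD
  have h1h' : 0 ≤ 1 - h' := by linarith
  have hdR : (0:ℝ) < d := hd0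
  have hD0 : 0 < D := by simp only [hD]; linarith
  have hfin : ∀ n, EMetric.diam (t n) ≠ ∞ :=
    fun n => ((hdiam n).trans_lt (hδ1.trans_lt ENNReal.one_lt_top)).ne
  set δn : ℕ → ℝ := fun n => (EMetric.diam (t n)).toReal with hδn
  have hδn0 : ∀ n, 0 ≤ δn n := fun n => ENNReal.toReal_nonneg
  have hδn1 : ∀ n, δn n ≤ 1 := by
    intro n
    have := (hdiam n).trans hδ1
    simpa [hδn] using ENNReal.toReal_mono ENNReal.one_ne_top this
  have hofReal : ∀ n, ENNReal.ofReal (δn n) = EMetric.diam (t n) :=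
    fun n => ENNReal.ofReal_toReal (hfin n)
  set x0 : ℕ → ℝ := fun n => if hn : (t n ∩ G).Nonempty then hn.choose else 0 with hx0def
  have hx0 : ∀ n, (t n ∩ G).Nonempty → x0 n ∈ t n ∩ G := by
    intro n hn
    simp only [hx0def, dif_pos hn]
    exact hn.choose_spec
  have hdist : ∀ n, ∀ y ∈ t n, ∀ z ∈ t n, |y - z| ≤ δn n := by
    intro n y hy z hz
    have hb : Bornology.IsBounded (t n) := Metric.isBounded_iff_ediam_ne_top.2 (hfin n)
    have := Metric.dist_le_diam_of_mem hb hy hz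
    rwa [Real.dist_eq] at this
  set N : ℕ → ℕ := fun n => ⌈2 * δn n ^ (h' - 1)⌉₊ + 1 with hN
  set b : ℕ → ℝ := fun n => f (x0 n) - δn n ^ h' with hbdef
  set T : ℕ × ℕ → Set (ℝ × ℝ) := fun p =>
    if (t p.1 ∩ G).Nonempty ∧ p.2 < N p.1 then
      Icc (x0 p.1 - δn p.1) (x0 p.1 + δn p.1) ×ˢ
        Icc (b p.1 + p.2 * δn p.1) (b p.1 + (p.2 + 1) * δn p.1)
    else ∅ with hT
  have hTval : ∀ n k, (t n ∩ G).Nonempty → k < N n →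
      T (n, k) = Icc (x0 n - δn n) (x0 n + δn n) ×ˢ
        Icc (b n + k * δn n) (b n + (k + 1) * δn n) := by
    intro n k h1 h2
    simp only [hT]
    rw [if_pos ⟨h1, h2⟩]
  have hTempty : ∀ n k, ¬((t n ∩ G).Nonempty ∧ k < N n) → T (n, k) = ∅ := by
    intro n k hc
    simp only [hT]
    rw [if_neg hc]
  have hpiece : ∀ n k, EMetric.diam (T (n, k)) ≤ 2 * EMetric.diam (t n) := by
    intro n k
    by_cases hc : (t n ∩ G).Nonempty ∧ k < N n
    · rw [hTval n k hc.1 hc.2]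
      apply EMetric.diam_le
      rintro ⟨p1, p2⟩ ⟨hp1, hp2⟩ ⟨q1, q2⟩ ⟨hq1, hq2⟩
      rw [Prod.edist_eq]
      apply max_le
      · rw [edist_dist]
        have := Real.dist_le_of_mem_Icc hp1 hq1
        have h2 : dist p1 q1 ≤ 2 * δn n := by linarith
        calc ENNReal.ofReal (dist p1 q1) ≤ ENNReal.ofReal (2 * δn n) :=
              ENNReal.ofReal_le_ofReal h2
          _ = 2 * EMetric.diam (t n) := by
              rw [ENNReal.ofReal_mul (by norm_num : (0:ℝ) ≤ 2), hofReal n]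
              norm_num
      · rw [edist_dist]
        have := Real.dist_le_of_mem_Icc hp2 hq2
        have h2 : dist p2 q2 ≤ δn n := by linarith
        calc ENNReal.ofReal (dist p2 q2) ≤ ENNReal.ofReal (δn n) :=
              ENNReal.ofReal_le_ofReal h2
          _ = EMetric.diam (t n) := hofReal n
          _ ≤ 2 * EMetric.diam (t n) := le_mul_of_one_le_left' one_le_two
    · rw [hTempty n k hc]
      simp [EMetric.diam]
  refine ⟨T, ?_, ?_, ?_⟩
  · -- coverage
    rintro - ⟨x, hxG, rfl⟩
    obtain ⟨n, hxn⟩ := mem_iUnion.1 (hcov hxG)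
    have hn : (t n ∩ G).Nonempty := ⟨x, hxn, hxG⟩
    have hxx0 : |x - x0 n| ≤ δn n := hdist n x hxn (x0 n) (hx0 n hn).1
    have hfx : |f x - f (x0 n)| ≤ δn n ^ h' := by
      refine le_trans (Hol x hxG _ (hx0 n hn).2) ?_
      exact Real.rpow_le_rpow (abs_nonneg _) hxx0 h'0.le
    have hbn : b n = f (x0 n) - δn n ^ h' := rfl
    have hx1 : x ∈ Icc (x0 n - δn n) (x0 n + δn n) := by
      rw [mem_Icc]
      have := abs_le.1 hxx0
      constructor <;> linarith [this.1, this.2]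
    have hfxb : 0 ≤ f x - b n ∧ f x - b n ≤ 2 * δn n ^ h' := by
      have := abs_le.1 hfx
      constructor <;> (rw [hbn]; linarith [this.1, this.2])
    rcases eq_or_lt_of_le (hδn0 n) with hδ0 | hδpos
    · -- δn n = 0
      have hzz : δn n = 0 := hδ0.symm
      have hrp : δn n ^ h' = 0 := by rw [hzz, Real.zero_rpow h'0.ne']
      refine mem_iUnion.2 ⟨(n, 0), ?_⟩
      rw [hTval n 0 hn (Nat.succ_pos _)]
      refine ⟨hx1, ?_⟩
      rw [mem_Icc]
      push_cast
      constructor <;> nlinarith [hfxb.1, hfxb.2, hzz, hrp]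
    · -- δn n > 0
      set q : ℝ := (f x - b n) / δn n with hq
      have hq0 : 0 ≤ q := div_nonneg hfxb.1 hδpos.le
      set k : ℕ := min (N n - 1) ⌊q⌋₊ with hk
      have hkN : k < N n := by
        have h8 : N n - 1 < N n := Nat.sub_lt (Nat.succ_pos _) one_pos
        exact lt_of_le_of_lt (min_le_left _ _) h8
      refine mem_iUnion.2 ⟨(n, k), ?_⟩
      rw [hTval n k hn hkN]
      refine ⟨hx1, ?_⟩
      rw [mem_Icc]
      constructor
      · -- lower
        have h1 : (k : ℝ) ≤ q := by
          have h9 : k ≤ ⌊q⌋₊ := min_le_right _ _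
          exact le_trans (by exact_mod_cast h9) (Nat.floor_le hq0)
        have h2 : (k : ℝ) * δn n ≤ f x - b n := by
          calc (k : ℝ) * δn n ≤ q * δn n := by nlinarith
            _ = f x - b n := by rw [hq]; field_simp
        linarith
      · -- upper
        rcases le_or_gt ⌊q⌋₊ (N n - 1) with hcase | hcase
        · have hkq : k = ⌊q⌋₊ := min_eq_right hcase
          have h2 : q < ⌊q⌋₊ + 1 := Nat.lt_floor_add_one q
          have h3 : f x - b n < ((k : ℝ) + 1) * δn n := by
            rw [hkq]
            calc f x - b n = q * δn n := by rw [hq]; field_simp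
              _ < ((⌊q⌋₊ : ℝ) + 1) * δn n := by nlinarith
          linarith
        · have hkq : k = N n - 1 := min_eq_left hcase.le
          have hkceil : (k : ℝ) = (⌈2 * δn n ^ (h' - 1)⌉₊ : ℝ) := by
            rw [hkq]
            simp [hN]
          have hsub : δn n ^ (h' - 1) * δn n = δn n ^ h' := by
            have h4 := Real.rpow_add hδpos (h' - 1) 1
            rw [sub_add_cancel, Real.rpow_one] at h4
            exact h4.symm
          have hceil := Nat.le_ceil (2 * δn n ^ (h' - 1))
          have h6 : 2 * δn n ^ h' ≤ ((k : ℝ) + 1) * δn n := by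
            rw [hkceil]
            nlinarith [hδn0 n]
          linarith [hfxb.2]
  · -- diam bound
    rintro ⟨n, k⟩
    exact le_trans (hpiece n k) (mul_le_mul_right (hdiam n) 2)
  · -- sum bound
    have hsum : (∑' p : ℕ × ℕ, EMetric.diam (T p) ^ D) =
        ∑' n, ∑' k, EMetric.diam (T (n, k)) ^ D :=
      ENNReal.tsum_prod (f := fun n k => EMetric.diam (T (n, k)) ^ D)
    rw [hsum]
    have hinner : ∀ n, (∑' k, EMetric.diam (T (n, k)) ^ D) ≤
        ENNReal.ofReal (2 ^ D * 4) * ⨆ _ : (t n).Nonempty, EMetric.diam (t n) ^ (d : ℝ) := by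
      intro n
      by_cases hn : (t n ∩ G).Nonempty
      · have htne : (t n).Nonempty := ⟨hn.choose, hn.choose_spec.1⟩
        rw [iSup_pos htne]
        rcases eq_or_lt_of_le (hδn0 n) with hz | hpos
        · -- diam t n = 0
          have hed : EMetric.diam (t n) = 0 := by
            rcases (ENNReal.toReal_eq_zero_iff _).1 hz.symm with h | h
            · exact h
            · exact absurd h (hfin n)
          have hzero : ∀ k, EMetric.diam (T (n, k)) ^ D = 0 := by
            intro k
            have h7 := hpiece n k
            rw [hed, mul_zero, nonpos_iff_eq_zero] at h7
            rw [h7, ENNReal.zero_rpow_of_pos hD0]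
          simp only [hzero, tsum_zero]
          exact zero_le
        · -- diam t n > 0
          have step1 : (∑' k, EMetric.diam (T (n, k)) ^ D) ≤
              ∑' k : ℕ, (if k < N n then (2 * EMetric.diam (t n)) ^ D else 0) := by
            apply ENNReal.tsum_le_tsum
            intro k
            by_cases hkn : k < N n
            · rw [if_pos hkn]
              exact ENNReal.rpow_le_rpow (hpiece n k) hD0.le
            · rw [if_neg hkn, hTempty n k (by tauto)]
              simp [ENNReal.zero_rpow_of_pos hD0, EMetric.diam]
          have step2 : (∑' k : ℕ, (if k < N n then (2 * EMetric.diam (t n)) ^ D else 0)) =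
              (N n : ℝ≥0∞) * (2 * EMetric.diam (t n)) ^ D := by
            rw [tsum_eq_sum (s := Finset.range (N n))
              (fun k hk => by rw [if_neg (by simpa using hk)])]
            rw [Finset.sum_congr rfl (fun k hk => if_pos (Finset.mem_range.1 hk))]
            rw [Finset.sum_const, Finset.card_range, nsmul_eq_mul]
          have step3 : (N n : ℝ≥0∞) * (2 * EMetric.diam (t n)) ^ D ≤
              ENNReal.ofReal (2 ^ D * 4) * EMetric.diam (t n) ^ (d : ℝ) := by
            have hNle : (N n : ℝ) ≤ 4 * δn n ^ (h' - 1) := by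
              have hc := Nat.ceil_lt_add_one (by positivity : (0:ℝ) ≤ 2 * δn n ^ (h' - 1))
              have hone : (1 : ℝ) ≤ δn n ^ (h' - 1) := by
                have h9 := Real.rpow_le_rpow_of_exponent_ge hpos (hδn1 n)
                  (by linarith : h' - 1 ≤ (0:ℝ))
                rwa [Real.rpow_zero] at h9
              have : (N n : ℝ) = (⌈2 * δn n ^ (h' - 1)⌉₊ : ℝ) + 1 := by
                simp [hN]
              rw [this]
              nlinarith
            have hreal : (N n : ℝ) * (2 * δn n) ^ D ≤ 2 ^ D * 4 * δn n ^ (d : ℝ) := by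
              have hmul : (2 * δn n) ^ D = 2 ^ D * δn n ^ D :=
                Real.mul_rpow (by norm_num) (hδn0 n)
              have hadd : δn n ^ (h' - 1) * δn n ^ D = δn n ^ (d : ℝ) := by
                rw [← Real.rpow_add hpos]
                congr 1
                rw [hD]; ring
              rw [hmul]
              calc (N n : ℝ) * (2 ^ D * δn n ^ D) ≤
                  (4 * δn n ^ (h' - 1)) * (2 ^ D * δn n ^ D) := by
                    apply mul_le_mul_of_nonneg_right hNle (by positivity)
                _ = 2 ^ D * 4 * (δn n ^ (h' - 1) * δn n ^ D) := by ring
                _ = 2 ^ D * 4 * δn n ^ (d : ℝ) := by rw [hadd]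
            calc (N n : ℝ≥0∞) * (2 * EMetric.diam (t n)) ^ D
                = ENNReal.ofReal (N n) * (ENNReal.ofReal (2 * δn n)) ^ D := by
                  rw [ENNReal.ofReal_natCast]
                  congr 2
                  rw [ENNReal.ofReal_mul (by norm_num : (0:ℝ) ≤ 2), hofReal n]
                  norm_num
              _ = ENNReal.ofReal (N n) * ENNReal.ofReal ((2 * δn n) ^ D) := by
                  rw [ENNReal.ofReal_rpow_of_pos (by linarith)]
              _ = ENNReal.ofReal ((N n : ℝ) * (2 * δn n) ^ D) := by
                  rw [← ENNReal.ofReal_mul (by positivity)]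
              _ ≤ ENNReal.ofReal (2 ^ D * 4 * δn n ^ (d : ℝ)) :=
                  ENNReal.ofReal_le_ofReal hreal
              _ = ENNReal.ofReal (2 ^ D * 4) * ENNReal.ofReal (δn n ^ (d : ℝ)) := by
                  rw [ENNReal.ofReal_mul (by positivity)]
              _ = ENNReal.ofReal (2 ^ D * 4) * EMetric.diam (t n) ^ (d : ℝ) := by
                  rw [← hofReal n, ENNReal.ofReal_rpow_of_pos hpos]
          exact le_trans step1 (le_trans step2.le step3)
      · have hzero : ∀ k, T (n, k) = ∅ := fun k => hTempty n k (by tauto)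
        have : ∀ k : ℕ, EMetric.diam (T (n, k)) ^ D = 0 := by
          intro k
          rw [hzero k]
          simp [ENNReal.zero_rpow_of_pos hD0, EMetric.diam]
        simp only [this, tsum_zero]
        exact zero_le
    calc (∑' n, ∑' k, EMetric.diam (T (n, k)) ^ D)
        ≤ ∑' n, ENNReal.ofReal (2 ^ D * 4) *
            ⨆ _ : (t n).Nonempty, EMetric.diam (t n) ^ (d : ℝ) :=
          ENNReal.tsum_le_tsum hinner
      _ = ENNReal.ofReal (2 ^ D * 4) *
            ∑' n, ⨆ _ : (t n).Nonempty, EMetric.diam (t n) ^ (d : ℝ) :=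
          ENNReal.tsum_mul_left

lemma graph_main {f : ℝ → ℝ} {G : Set ℝ} {h' : ℝ} (h'0 : 0 < h') (h'1 : h' ≤ 1)
    (Hol : ∀ x ∈ G, ∀ y ∈ G, |f x - f y| ≤ |x - y| ^ h') :
    dimH ((fun x => (x, f x)) '' G) ≤ dimH G + ENNReal.ofReal (1 - h') := by
  have hG1 : dimH G ≠ ∞ := by
    have h2 : dimH G ≤ dimH (univ : Set ℝ) := dimH_mono (subset_univ G)
    rw [Real.dimH_univ] at h2
    exact (h2.trans_lt ENNReal.one_lt_top).ne
  apply ENNReal.le_of_forall_pos_le_add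
  intro ε hε _
  set d : ℝ≥0 := (dimH G).toNNReal + ε with hd
  have hcoe : (d : ℝ≥0∞) = dimH G + ε := by
    rw [hd, ENNReal.coe_add, ENNReal.coe_toNNReal hG1]
  have hdim_lt : dimH G < (d : ℝ≥0∞) := by
    rw [hcoe]
    exact ENNReal.lt_add_right hG1 (by exact_mod_cast hε.ne')
  have hd0 : 0 < d := by
    rw [hd]; positivity
  suffices H : dimH ((fun x => (x, f x)) '' G) ≤ (d : ℝ≥0∞) + ENNReal.ofReal (1 - h') by
    refine H.trans ?_
    rw [hcoe]
    rw [add_right_comm]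
  set D : ℝ := (d : ℝ) + (1 - h') with hD
  have h1h' : 0 ≤ 1 - h' := by linarith
  have hD0 : 0 < D := by
    have : (0:ℝ) < d := hd0
    simp only [hD]; linarith
  set K : ℝ≥0∞ := ENNReal.ofReal (2 ^ D * 4) with hK
  have hK0 : 0 < K := by
    rw [hK]
    apply ENNReal.ofReal_pos.2
    positivity
  have hKtop : K ≠ ∞ := ENNReal.ofReal_ne_top
  have hmuG : μH[(d : ℝ)] G = 0 := hausdorffMeasure_of_dimH_lt hdim_lt
  -- main estimate
  have main : ∀ ε' : ℝ≥0∞, 0 < ε' →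
      μH[D] ((fun x => (x, f x)) '' G) ≤ K * ε' := by
    intro ε' hε'
    have hcovm : ∀ m : ℕ, ∃ T : ℕ × ℕ → Set (ℝ × ℝ),
        ((fun x => (x, f x)) '' G ⊆ ⋃ i, T i) ∧
        (∀ i, EMetric.diam (T i) ≤ 2 * ((2:ℝ≥0∞)⁻¹ ^ (m + 1))) ∧
        ∑' i, EMetric.diam (T i) ^ D ≤ K * ε' := by
      intro m
      have hδm0 : (0:ℝ≥0∞) < (2:ℝ≥0∞)⁻¹ ^ (m + 1) := by
        apply ENNReal.pow_pos
        simp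
      have hδm1 : ((2:ℝ≥0∞)⁻¹ ^ (m + 1)) ≤ 1 := by
        apply pow_le_one'
        simp [ENNReal.inv_le_one]
      obtain ⟨t, hcov, hdiam, hsum⟩ :=
        exists_cover (d : ℝ) G hmuG hε' hδm0
      obtain ⟨T, hTcov, hTdiam, hTsum⟩ :=
        cover_step h'0 h'1 Hol hd0 hδm1 t hcov hdiam
      exact ⟨T, hTcov, hTdiam, hTsum.trans (mul_le_mul_right hsum.le K)⟩
    choose T hTcov hTdiam hTsum using hcovm
    have hr0 : Tendsto (fun m : ℕ => 2 * ((2:ℝ≥0∞)⁻¹ ^ (m + 1))) atTop (nhds 0) := by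
      have h2 : Tendsto (fun m : ℕ => ((2:ℝ≥0∞)⁻¹ ^ m)) atTop (nhds 0) :=
        ENNReal.tendsto_pow_atTop_nhds_zero_of_lt_one (by simp [ENNReal.inv_lt_one])
      have h3 : ∀ m : ℕ, 2 * ((2:ℝ≥0∞)⁻¹ ^ (m + 1)) = (2:ℝ≥0∞)⁻¹ ^ m := by
        intro m
        rw [pow_succ]
        rw [mul_comm]
        rw [mul_assoc]
        rw [ENNReal.inv_mul_cancel (by norm_num) (by norm_num)]
        rw [mul_one]
      simpa only [h3] using h2
    have hmeas := MeasureTheory.Measure.hausdorffMeasure_le_liminf_tsum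
      (ι := fun _ : ℕ => ℕ × ℕ) D ((fun x => (x, f x)) '' G)
      (fun m : ℕ => 2 * ((2:ℝ≥0∞)⁻¹ ^ (m + 1))) hr0 T
      (Eventually.of_forall hTdiam) (Eventually.of_forall hTcov)
    refine hmeas.trans ?_
    calc liminf (fun m => ∑' i, EMetric.diam (T m i) ^ D) atTop
        ≤ liminf (fun _ : ℕ => K * ε') atTop :=
          Filter.liminf_le_liminf (Eventually.of_forall hTsum)
      _ = K * ε' := Filter.liminf_const _
  -- conclude μH[D] = 0
  have hmu0 : μH[D] ((fun x => (x, f x)) '' G) = 0 := by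
    by_contra hne
    have hpos : 0 < μH[D] ((fun x => (x, f x)) '' G) := pos_iff_ne_zero.2 hne
    have hfinite : μH[D] ((fun x => (x, f x)) '' G) ≠ ∞ := by
      have := main 1 one_pos
      rw [mul_one] at this
      exact (this.trans_lt hKtop.lt_top).ne
    set μ := μH[D] ((fun x => (x, f x)) '' G) with hμ
    have hle := main (μ / (2 * K)) (by
      apply ENNReal.div_pos (pos_iff_ne_zero.2 hne).ne'
      exact ENNReal.mul_ne_top (by norm_num) hKtop)
    have h2K : ((2:ℝ≥0∞) * K)⁻¹ = 2⁻¹ * K⁻¹ :=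
      ENNReal.mul_inv (by norm_num) (by simp [hKtop])
    have heq : K * (μ / (2 * K)) = μ / 2 := by
      calc K * (μ / (2 * K)) = K * (μ * (2⁻¹ * K⁻¹)) := by
            rw [div_eq_mul_inv, h2K]
        _ = (K * K⁻¹) * (2⁻¹ * μ) := by ring
        _ = 2⁻¹ * μ := by rw [ENNReal.mul_inv_cancel hK0.ne' hKtop, one_mul]
        _ = μ / 2 := by rw [div_eq_mul_inv, mul_comm]
    rw [heq] at hle
    exact absurd hle (not_le.2 (ENNReal.half_lt_self hne hfinite))
  -- convert to dimH
  have hDnn : ((d + (1 - h').toNNReal : ℝ≥0) : ℝ) = D := by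
    push_cast
    rw [Real.coe_toNNReal _ h1h']
  have hdim : dimH ((fun x => (x, f x)) '' G) ≤ ((d + (1 - h').toNNReal : ℝ≥0) : ℝ≥0∞) := by
    apply dimH_le_of_hausdorffMeasure_ne_top
    rw [show ((d + (1 - h').toNNReal : ℝ≥0) : ℝ) = D from hDnn, hmu0]
    exact ENNReal.zero_ne_top
  refine hdim.trans ?_
  rw [ENNReal.coe_add]
  gcongr
  exact le_rfl

theorem stmt_3 (f : ℝ → ℝ) (E : Set ℝ) (hne : E.Nonempty)
    (h : ℝ) (hh : 0 < h) (h1 : h ≤ 1) (hinf : sInf (holderExp f '' E) = h) :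
    dimH ((fun x => (x, f x)) '' E) ≤ dimH E + 1 - ENNReal.ofReal h := by
  -- every point has Hölder exponent at least h
  have hbdd : BddBelow (holderExp f '' E) := by
    by_contra hb
    rw [Real.sInf_of_not_bddBelow hb] at hinf
    linarith
  have hlow : ∀ x ∈ E, h ≤ holderExp f x := by
    intro x hx
    rw [← hinf]
    exact csInf_le hbdd ⟨x, hx, rfl⟩
  -- rewrite the goal
  have hofh : ENNReal.ofReal h ≤ 1 := by
    rw [← ENNReal.ofReal_one]
    exact ENNReal.ofReal_le_ofReal h1
  have hgoal : dimH E + 1 - ENNReal.ofReal h = dimH E + ENNReal.ofReal (1 - h) := by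
    apply ENNReal.sub_eq_of_eq_add ENNReal.ofReal_ne_top
    rw [add_assoc, ← ENNReal.ofReal_add (by linarith) hh.le]
    norm_num
  rw [hgoal]
  apply ENNReal.le_of_forall_pos_le_add
  intro ε hε _
  set ε' : ℝ := min ((ε : ℝ) / 2) (h / 2) with hε'
  have hε'0 : 0 < ε' := lt_min (by positivity) (by positivity)
  set h' : ℝ := h - ε' with hh'def
  have hh'0 : 0 < h' := by
    have : ε' ≤ h / 2 := min_le_right _ _
    simp only [hh'def]; linarith
  have hh'h : h' < h := by simp only [hh'def]; linarith
  have hh'1 : h' ≤ 1 := by simp only [hh'def]; linarith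
  -- countable decomposition
  set L : ℕ → ℝ := fun n => 1 / (2 * (n + 2)) with hL
  have hLpos : ∀ n, 0 < L n := by
    intro n; simp only [hL]; positivity
  set F : ℕ × ℤ → Set ℝ := fun p =>
    ({x ∈ E | ∀ r : ℝ, 0 < r → r < 1 / (p.1 + 2) →
        ∀ s ∈ Metric.ball x r, ∀ t ∈ Metric.ball x r, |f s - f t| ≤ r ^ h'} ∩
      Icc (p.2 * L p.1) ((p.2 + 1) * L p.1)) with hF
  have hEsub : E = ⋃ p : ℕ × ℤ, F p := by
    apply Subset.antisymm
    · intro x hx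
      obtain ⟨n, hn⟩ := pointwise_holder (hlow x hx) hh'0 hh'h
      refine mem_iUnion.2 ⟨(n, ⌊x / L n⌋), ⟨⟨hx, hn⟩, ?_⟩⟩
      have h4 := Int.floor_le (x / L n)
      have h5 := Int.lt_floor_add_one (x / L n)
      rw [mem_Icc]
      constructor
      · calc (⌊x / L n⌋ : ℝ) * L n ≤ x / L n * L n := by
              nlinarith [hLpos n]
          _ = x := div_mul_cancel₀ _ (hLpos n).ne'
      · calc x = x / L n * L n := (div_mul_cancel₀ _ (hLpos n).ne').symm
          _ ≤ ((⌊x / L n⌋ : ℝ) + 1) * L n := by nlinarith [hLpos n]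
    · refine iUnion_subset fun p => ?_
      intro x hx
      exact hx.1.1
  have hdim : ∀ p : ℕ × ℤ, dimH ((fun x => (x, f x)) '' F p) ≤
      dimH E + ENNReal.ofReal (1 - h') := by
    intro ⟨n, m⟩
    have hHol : ∀ x ∈ F (n, m), ∀ y ∈ F (n, m), |f x - f y| ≤ |x - y| ^ h' := by
      intro x hx y hy
      rcases eq_or_ne x y with rfl | hxy
      · simp [Real.zero_rpow hh'0.ne']
      · have hxy0 : 0 < |x - y| := abs_pos.2 (sub_ne_zero.2 hxy)
        have hxyL : |x - y| ≤ L n := by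
          have h6 := hx.2
          have h7 := hy.2
          rw [mem_Icc] at h6 h7
          rw [abs_sub_le_iff]
          constructor <;> nlinarith [hLpos n, h6.1, h6.2, h7.1, h7.2]
        have hxylt : |x - y| < 1 / (n + 2) := by
          have : L n = 1 / (2 * (n + 2)) := rfl
          have h8 : 1 / (2 * ((n:ℝ) + 2)) < 1 / ((n:ℝ) + 2) := by
            apply div_lt_div_of_pos_left one_pos (by positivity)
            nlinarith [Nat.cast_nonneg (α := ℝ) n]
          linarith [hxyL]
        have hev : ∀ᶠ r in nhdsWithin |x - y| (Ioi |x - y|), |f x - f y| ≤ r ^ h' := by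
          filter_upwards [Ioo_mem_nhdsGT_of_mem ⟨le_refl |x - y|, hxylt⟩] with r hr
          have hr0 : 0 < r := lt_trans hxy0 hr.1
          refine hx.1.2 r hr0 hr.2 x (Metric.mem_ball_self hr0) y ?_
          rw [Metric.mem_ball, Real.dist_eq, abs_sub_comm]
          exact hr.1
        have htend : Tendsto (fun r : ℝ => r ^ h')
            (nhdsWithin |x - y| (Ioi |x - y|)) (nhds (|x - y| ^ h')) := by
          apply Tendsto.mono_left _ nhdsWithin_le_nhds
          exact (Real.continuousAt_rpow_const _ _ (Or.inl hxy0.ne')).tendsto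
        exact ge_of_tendsto htend hev
    calc dimH ((fun x => (x, f x)) '' F (n, m))
        ≤ dimH (F (n, m)) + ENNReal.ofReal (1 - h') := graph_main hh'0 hh'1 hHol
      _ ≤ dimH E + ENNReal.ofReal (1 - h') := by
          gcongr
          exact fun x hx => hx.1.1
  have himg : (fun x => (x, f x)) '' E = ⋃ p : ℕ × ℤ, (fun x => (x, f x)) '' F p := by
    rw [hEsub, image_iUnion]
  rw [himg, dimH_iUnion]
  refine iSup_le fun p => (hdim p).trans ?_
  -- dimH E + ofReal (1 - h') ≤ dimH E + ofReal (1 - h) + ε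
  have hsplit : ENNReal.ofReal (1 - h') ≤ ENNReal.ofReal (1 - h) + ε := by
    have h9 : (1 : ℝ) - h' = (1 - h) + ε' := by simp only [hh'def]; ring
    rw [h9, ENNReal.ofReal_add (by linarith) hε'0.le]
    gcongr
    calc ENNReal.ofReal ε' ≤ ENNReal.ofReal (ε : ℝ) := by
          apply ENNReal.ofReal_le_ofReal
          calc ε' ≤ (ε : ℝ) / 2 := min_le_left _ _
            _ ≤ ε := by linarith [ε.coe_nonneg]
      _ = (ε : ℝ≥0∞) := ENNReal.ofReal_coe_nnreal
  calc dimH E + ENNReal.ofReal (1 - h')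
      ≤ dimH E + (ENNReal.ofReal (1 - h) + ε) := add_le_add_right hsplit _
    _ = dimH E + ENNReal.ofReal (1 - h) + ε := by rw [add_assoc]
end

section
/- Let b ≥ 2 and let (W_0,…,W_{b−1}) be a random vector with values in ℝᵇ such that P(W_j ≠ 0 for all j) = 1, and let Z be a real random variable, independent of W, such that Z satisfies in distribution Z = Σ_{j=0}^{b−1} W_j·Z_j where Z_0,…,Z_{b−1} are i.i.d. copies of Z, independent of W. If φ denotes the characteristic function of Z and l = limsup_{t→∞} |φ(t)|, then l = 0 or l = 1. -/
open Filter MeasureTheory ProbabilityTheory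

lemma aux_pi_integral {ι : Type*} [Fintype ι] (μ : Measure ℝ) [IsProbabilityMeasure μ]
    (f : ι → ℝ → ℂ) :
    ∫ x : ι → ℝ, ∏ i, f i (x i) ∂(Measure.pi fun _ => μ) = ∏ i, ∫ x, f i x ∂μ :=
  MeasureTheory.integral_fintype_prod_eq_prod (E := fun _ => ℝ) (μ := fun _ => μ) f

lemma aux_map_pi {Ω : Type*} [MeasureSpace Ω] [IsProbabilityMeasure (volume : Measure Ω)]
    {b : ℕ} (Zs : Fin b → Ω → ℝ) (hZs : ∀ j, Measurable (Zs j))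
    (hiid : iIndepFun Zs volume) :
    Measure.map (fun ω => fun j => Zs j ω) volume
      = Measure.pi (fun j => Measure.map (Zs j) volume) := by
  have hV : Measurable (fun ω => fun j => Zs j ω) := measurable_pi_lambda _ hZs
  refine (Measure.pi_eq fun s hs => ?_).symm
  rw [Measure.map_apply hV (MeasurableSet.univ_pi hs)]
  have hpre : (fun ω => fun j => Zs j ω) ⁻¹' Set.pi Set.univ s
      = ⋂ j ∈ Finset.univ, Zs j ⁻¹' s j := by
    ext ω; simp [Set.mem_pi]
  rw [hpre, hiid.measure_inter_preimage_eq_mul Finset.univ (fun i _ => hs i)]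
  exact Finset.prod_congr rfl fun i _ => (Measure.map_apply (hZs i) (hs i)).symm

set_option maxHeartbeats 1000000 in
theorem stmt_12 {Ω : Type*} [MeasureSpace Ω] [IsProbabilityMeasure (volume : Measure Ω)]
    (b : ℕ) (hb : 2 ≤ b) (W : Ω → Fin b → ℝ) (hW : Measurable W)
    (Z : Ω → ℝ) (hZ : Measurable Z)
    (Zs : Fin b → Ω → ℝ) (hZs : ∀ j, Measurable (Zs j))
    (hcopies : ∀ j, Measure.map (Zs j) volume = Measure.map Z volume)
    (hiid : iIndepFun Zs volume)
    (hWindep : IndepFun W (fun ω => fun j => Zs j ω) volume)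
    (hWne : volume {ω | ∀ j, W ω j ≠ 0} = 1)
    (hdist : Measure.map Z volume = Measure.map (fun ω => ∑ j, W ω j * Zs j ω) volume)
    (φ : ℝ → ℂ) (hφ : ∀ t : ℝ, φ t = ∫ ω, Complex.exp ((t : ℂ) * (Z ω : ℂ) * Complex.I))
    (l : ℝ) (hl : l = limsup (fun t => ‖φ t‖) atTop) :
    l = 0 ∨ l = 1 := by
  -- notation
  set f : ℝ → ℝ := fun t => ‖φ t‖ with hfdef
  set μ : Measure ℝ := Measure.map Z volume with hμ
  have hμprob : IsProbabilityMeasure μ := Measure.isProbabilityMeasure_map hZ.aemeasurable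
  set E : ℝ → ℂ := fun s => Complex.exp ((s : ℂ) * Complex.I) with hEdef
  have hE : ∀ s : ℝ, E s = Complex.exp ((s : ℂ) * Complex.I) := fun s => rfl
  have hEcont : Continuous E := by
    rw [hEdef]; continuity
  have hEnorm : ∀ s : ℝ, ‖E s‖ = 1 := fun s => Complex.norm_exp_ofReal_mul_I s
  have hφE : ∀ t, φ t = ∫ ω, E (t * Z ω) := by
    intro t; rw [hφ]; congr 1; ext ω; push_cast [hE]; ring_nf
  have hφμ : ∀ t, φ t = ∫ x, E (t * x) ∂μ := by
    intro t
    rw [hφE, hμ, integral_map hZ.aemeasurable]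
    exact (hEcont.comp (continuous_const.mul continuous_id)).aestronglyMeasurable
  have hφcont : Continuous φ := by
    have : Continuous fun t : ℝ => ∫ ω, E (t * Z ω) := by
      apply continuous_of_dominated (bound := fun _ => (1:ℝ))
      · exact fun t => ((hEcont.comp (continuous_const.mul continuous_id)).measurable.comp
          hZ).aestronglyMeasurable
      · exact fun t => Eventually.of_forall fun ω => le_of_eq (hEnorm _)
      · exact integrable_const 1
      · exact Eventually.of_forall fun ω => hEcont.comp (continuous_id.mul continuous_const)
    simpa [← hφE] using this
  have hfcont : Continuous f := continuous_norm.comp hφcont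
  have hbound : ∀ t, f t ≤ 1 := by
    intro t
    rw [hfdef]
    show ‖φ t‖ ≤ 1
    rw [hφE]
    calc ‖∫ ω, E (t * Z ω)‖ ≤ ∫ ω, ‖E (t * Z ω)‖ := norm_integral_le_integral_norm _
    _ = 1 := by simp [hEnorm]
  have hf0 : ∀ t, 0 ≤ f t := fun t => norm_nonneg _
  have habsneg : ∀ s, f (-s) = f s := by
    intro s
    show ‖φ (-s)‖ = ‖φ s‖
    have hconj : ∀ x : ℝ, E (-x) = starRingEnd ℂ (E x) := by
      intro x
      rw [hE, hE, ← Complex.exp_conj, map_mul, Complex.conj_I, Complex.conj_ofReal]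
      push_cast
      ring_nf
    rw [hφE, hφE]
    have : ∀ ω, E (-s * Z ω) = starRingEnd ℂ (E (s * Z ω)) := fun ω => by
      rw [← hconj]; ring_nf
    simp_rw [this, integral_conj, Complex.norm_conj]
  set μW : Measure (Fin b → ℝ) := Measure.map W volume with hμW
  have hμWprob : IsProbabilityMeasure μW := Measure.isProbabilityMeasure_map hW.aemeasurable
  have hV : Measurable (fun ω => fun j => Zs j ω) := measurable_pi_lambda _ hZs
  set μV : Measure (Fin b → ℝ) := Measure.map (fun ω => fun j => Zs j ω) volume with hμV
  have hμVprob : IsProbabilityMeasure μV := Measure.isProbabilityMeasure_map hV.aemeasurable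
  have hpi : μV = Measure.pi (fun _ => μ) := by
    rw [hμV, aux_map_pi Zs hZs hiid]
    congr 1
    exact funext fun j => hcopies j
  have hkey : ∀ t, f t ≤ ∫ w, ∏ j, f (t * w j) ∂μW := by
    intro t
    show ‖φ t‖ ≤ ∫ w, ∏ j, ‖φ (t * w j)‖ ∂μW
    have hS : Measurable (fun ω => ∑ j, W ω j * Zs j ω) :=
      Finset.measurable_sum _ fun j _ => ((hW.eval).mul (hZs j))
    set g : (Fin b → ℝ) × (Fin b → ℝ) → ℂ := fun p => E (t * ∑ j, p.1 j * p.2 j) with hg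
    have hgmeas : Measurable g := by
      apply hEcont.measurable.comp
      exact measurable_const.mul (Finset.measurable_sum _ fun j _ =>
        ((measurable_fst.eval).mul (measurable_snd.eval)))
    have hgint : Integrable g (μW.prod μV) := by
      refine ⟨hgmeas.aestronglyMeasurable, ?_⟩
      apply HasFiniteIntegral.mono' (g := fun _ => (1:ℝ)) (hasFiniteIntegral_const 1)
      exact Eventually.of_forall fun p => le_of_eq (hEnorm _)
    have step1 : φ t = ∫ w, ∫ z, E (t * ∑ j, w j * z j) ∂μV ∂μW := by
      have h1 : φ t = ∫ ω, E (t * ∑ j, W ω j * Zs j ω) := by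
        rw [hφμ, hdist, integral_map hS.aemeasurable]
        exact (hEcont.comp (continuous_const.mul continuous_id)).aestronglyMeasurable
      have hP : Measurable (fun ω => (W ω, fun j => Zs j ω)) := hW.prodMk hV
      have h2 : (∫ ω, E (t * ∑ j, W ω j * Zs j ω))
          = ∫ p, g p ∂(Measure.map (fun ω => (W ω, fun j => Zs j ω)) volume) := by
        rw [integral_map hP.aemeasurable hgmeas.aestronglyMeasurable]
      have h3 : Measure.map (fun ω => (W ω, fun j => Zs j ω)) volume = μW.prod μV :=
        (indepFun_iff_map_prod_eq_prod_map_map hW.aemeasurable hV.aemeasurable).mp hWindep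
      rw [h1, h2, h3, integral_prod g hgint]
    have step2 : ∀ w : Fin b → ℝ,
        (∫ z, E (t * ∑ j, w j * z j) ∂μV) = ∏ j, φ (t * w j) := by
      intro w
      have hfac : ∀ z : Fin b → ℝ, E (t * ∑ j, w j * z j) = ∏ j, E ((t * w j) * z j) := by
        intro z
        rw [hE]
        have : ((↑(t * ∑ j, w j * z j) : ℂ)) * Complex.I
            = ∑ j, ((↑((t * w j) * z j) : ℂ)) * Complex.I := by
          push_cast
          rw [← Finset.sum_mul]
          congr 1
          rw [Finset.mul_sum]
          exact Finset.sum_congr rfl fun j _ => by ring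
        rw [this, Complex.exp_sum]
      simp_rw [hfac]
      rw [hpi, aux_pi_integral μ (fun j x => E ((t * w j) * x))]
      exact Finset.prod_congr rfl fun j _ => (hφμ (t * w j)).symm
    simp_rw [step2] at step1
    rw [step1]
    calc ‖∫ w, ∏ j, φ (t * w j) ∂μW‖
        ≤ ∫ w, ‖∏ j, φ (t * w j)‖ ∂μW := norm_integral_le_integral_norm _
    _ = ∫ w, ∏ j, ‖φ (t * w j)‖ ∂μW := by
        congr 1; funext w; rw [norm_prod]
  -- the almost everywhere nonvanishing of W under μW
  have hμWae : ∀ᵐ w ∂μW, ∀ j, w j ≠ 0 := by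
    have hms : MeasurableSet {w : Fin b → ℝ | ∀ j, w j ≠ 0} := by
      have : {w : Fin b → ℝ | ∀ j, w j ≠ 0} = ⋂ j, (fun w : Fin b → ℝ => w j) ⁻¹' {0}ᶜ := by
        ext w; simp
      rw [this]
      exact MeasurableSet.iInter fun j =>
        (measurable_pi_apply j) (measurableSet_singleton 0).compl
    have h1 : μW {w : Fin b → ℝ | ∀ j, w j ≠ 0} = 1 := by
      rw [hμW, Measure.map_apply hW hms]
      exact hWne
    have h2 : μW {w : Fin b → ℝ | ∀ j, w j ≠ 0}ᶜ = 0 := by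
      rw [measure_compl hms (measure_ne_top _ _), measure_univ, h1, tsub_self]
    rw [ae_iff]
    have heq : {w : Fin b → ℝ | ¬ ∀ j, w j ≠ 0} = {w : Fin b → ℝ | ∀ j, w j ≠ 0}ᶜ := rfl
    rw [heq]
    exact h2
  -- limsup facts
  have hbddabove : IsBoundedUnder (· ≤ ·) atTop f := isBoundedUnder_of ⟨1, hbound⟩
  have hcob : IsCoboundedUnder (· ≤ ·) atTop f :=
    IsBoundedUnder.isCoboundedUnder_le (isBoundedUnder_of ⟨0, hf0⟩)
  have hl1 : l ≤ 1 := by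
    rw [hl]; exact limsup_le_of_le hcob (Eventually.of_forall hbound)
  have hl0 : 0 ≤ l := by
    rw [hl]; exact le_limsup_of_frequently_le (Frequently.of_forall hf0) hbddabove
  -- sequence along which f attains the limsup
  have hseq : ∀ n : ℕ, ∃ u : ℝ, (n : ℝ) ≤ u ∧ l - 1/(n+1) ≤ f u ∧ f u ≤ l + 1/(n+1) := by
    intro n
    have hpos : (0:ℝ) < 1/(n+1) := by positivity
    have hev : ∀ᶠ s in atTop, f s < l + 1/(n+1) := by
      apply eventually_lt_of_limsup_lt _ hbddabove
      rw [← hl]; linarith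
    have hfreq : ∃ᶠ s in atTop, l - 1/(n+1) < f s := by
      apply frequently_lt_of_lt_limsup hcob
      rw [← hl]; linarith
    have hev2 : ∀ᶠ s : ℝ in atTop, (n:ℝ) ≤ s := eventually_ge_atTop _
    obtain ⟨u, h1, h2, h3⟩ := (hfreq.and_eventually (hev.and hev2)).exists
    exact ⟨u, h3, h1.le, h2.le⟩
  choose t ht1 ht2 ht3 using hseq
  have ht_top : Tendsto t atTop atTop :=
    tendsto_atTop_mono ht1 tendsto_natCast_atTop_atTop
  have hdelta : Tendsto (fun n : ℕ => 1/((n:ℝ)+1)) atTop (nhds 0) :=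
    tendsto_one_div_add_atTop_nhds_zero_nat
  have ht_lim : Tendsto (fun n => f (t n)) atTop (nhds l) := by
    apply tendsto_of_tendsto_of_tendsto_of_le_of_le
      (g := fun n : ℕ => l - 1/((n:ℝ)+1)) (h := fun n : ℕ => l + 1/((n:ℝ)+1))
    · simpa using (tendsto_const_nhds.sub hdelta)
    · simpa using (tendsto_const_nhds.add hdelta)
    · exact ht2
    · exact ht3
  -- main inequality : l ≤ l ^ b
  have key : ∀ ε : ℝ, 0 < ε → l ≤ (l + ε) ^ b := by
    intro ε hε
    apply le_of_forall_pos_le_add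
    intro δ hδ
    set h : ℕ → (Fin b → ℝ) → ℝ := fun n w => ∏ j, f (t n * w j) with hh
    have hhmeas : ∀ n, Measurable (h n) := fun n =>
      Finset.measurable_prod _ fun j _ =>
        hfcont.measurable.comp (measurable_const.mul (measurable_pi_apply j))
    have hh0 : ∀ n w, 0 ≤ h n w := fun n w => Finset.prod_nonneg fun j _ => hf0 _
    have hh1 : ∀ n w, h n w ≤ 1 := fun n w =>
      Finset.prod_le_one (fun j _ => hf0 _) (fun j _ => hbound _)
    set H : ℕ → (Fin b → ℝ) → ENNReal := fun n w => ENNReal.ofReal (h n w) with hH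
    have hint : ∀ n, ∫ w, h n w ∂μW = (∫⁻ w, H n w ∂μW).toReal := fun n =>
      integral_eq_lintegral_of_nonneg_ae (Eventually.of_forall (hh0 n))
        (hhmeas n).aestronglyMeasurable
    have hFatou : limsup (fun n => ∫⁻ w, H n w ∂μW) atTop
        ≤ ∫⁻ w, limsup (fun n => H n w) atTop ∂μW := by
      apply limsup_lintegral_le (g := fun _ => 1)
        (fun n => (hhmeas n).ennreal_ofReal)
        (fun n => Eventually.of_forall fun w => ENNReal.ofReal_le_one.mpr (hh1 n w))
      simp
    have hae : ∀ᵐ w ∂μW, limsup (fun n => H n w) atTop ≤ ENNReal.ofReal ((l+ε)^b) := by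
      filter_upwards [hμWae] with w hw
      refine limsup_le_of_le (IsBoundedUnder.isCoboundedUnder_le
        (isBoundedUnder_of ⟨0, fun n => zero_le⟩)) ?_
      have hev : ∀ᶠ s in atTop, f s < l + ε := by
        apply eventually_lt_of_limsup_lt _ hbddabove
        rw [← hl]; linarith
      have hj : ∀ j, ∀ᶠ n in atTop, f (t n * w j) ≤ l + ε := by
        intro j
        have habs : ∀ s : ℝ, f (s * w j) = f (s * |w j|) := by
          intro s
          rcases le_or_gt 0 (w j) with hwj | hwj
          · rw [abs_of_nonneg hwj]
          · rw [abs_of_neg hwj, ← habsneg (s * -w j)]; ring_nf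
        have htend : Tendsto (fun n => t n * |w j|) atTop atTop :=
          ht_top.atTop_mul_const (abs_pos.mpr (hw j))
        filter_upwards [htend.eventually hev] with n hn
        rw [habs]; exact hn.le
      filter_upwards [eventually_all.mpr hj] with n hn
      apply ENNReal.ofReal_le_ofReal
      calc h n w ≤ ∏ _j : Fin b, (l + ε) :=
            Finset.prod_le_prod (fun j _ => hf0 _) (fun j _ => hn j)
      _ = (l+ε)^b := by rw [Finset.prod_const, Finset.card_univ, Fintype.card_fin]
    have h2 : ∫⁻ w, limsup (fun n => H n w) atTop ∂μW ≤ ENNReal.ofReal ((l+ε)^b) := by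
      calc ∫⁻ w, limsup (fun n => H n w) atTop ∂μW
          ≤ ∫⁻ _w, ENNReal.ofReal ((l+ε)^b) ∂μW := lintegral_mono_ae hae
        _ = ENNReal.ofReal ((l+ε)^b) := by simp
    have hlt : limsup (fun n => ∫⁻ w, H n w ∂μW) atTop < ENNReal.ofReal ((l+ε)^b + δ) := by
      refine lt_of_le_of_lt (hFatou.trans h2) ?_
      rw [ENNReal.ofReal_lt_ofReal_iff (by positivity)]
      linarith
    have hev2 : ∀ᶠ n in atTop, (∫⁻ w, H n w ∂μW) < ENNReal.ofReal ((l+ε)^b + δ) :=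
      eventually_lt_of_limsup_lt hlt
    have hev3 : ∀ᶠ n in atTop, ∫ w, h n w ∂μW ≤ (l+ε)^b + δ := by
      filter_upwards [hev2] with n hn
      rw [hint n]
      exact ENNReal.toReal_le_of_le_ofReal (by positivity) hn.le
    have hle1 : l ≤ limsup (fun n => ∫ w, h n w ∂μW) atTop := by
      rw [← ht_lim.limsup_eq]
      have hbd : IsBoundedUnder (· ≤ ·) atTop (fun n => ∫ w, ∏ j, f (t n * w j) ∂μW) := by
        refine isBoundedUnder_of ⟨1, fun n => ?_⟩
        calc ∫ w, ∏ j, f (t n * w j) ∂μW ≤ ∫ _w, (1:ℝ) ∂μW := by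
              apply integral_mono_of_nonneg (Eventually.of_forall (hh0 n))
                (integrable_const 1) (Eventually.of_forall (hh1 n))
          _ = 1 := by simp
      exact limsup_le_limsup (Eventually.of_forall fun n => hkey (t n))
        (IsBoundedUnder.isCoboundedUnder_le (isBoundedUnder_of ⟨0, fun n => hf0 _⟩)) hbd
    refine hle1.trans (limsup_le_of_le ?_ hev3)
    exact IsBoundedUnder.isCoboundedUnder_le
      (isBoundedUnder_of ⟨0, fun n => integral_nonneg (hh0 n)⟩)
  have hmain : l ≤ l ^ b := by
    have hcont2 : Tendsto (fun ε : ℝ => (l + ε)^b) (nhdsWithin 0 (Set.Ioi 0)) (nhds (l^b)) := by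
      have : Continuous fun ε : ℝ => (l + ε)^b := by continuity
      have h0 := this.tendsto 0
      simp only [add_zero] at h0
      exact h0.mono_left nhdsWithin_le_nhds
    exact ge_of_tendsto hcont2 (eventually_nhdsWithin_of_forall fun ε hε => key ε hε)
  -- conclude
  by_contra hcon
  push_neg at hcon
  obtain ⟨h0, h1⟩ := hcon
  have hlpos : 0 < l := lt_of_le_of_ne hl0 (Ne.symm h0)
  have hllt : l < 1 := lt_of_le_of_ne hl1 h1
  have : l ^ b < l := by
    calc l ^ b ≤ l ^ 2 := pow_le_pow_of_le_one hl0 hl1 hb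
    _ = l * l := sq l
    _ < l * 1 := mul_lt_mul_of_pos_left hllt hlpos
    _ = l := mul_one l
  linarith
end
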